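/- arXiv:1805.04999 — 4 statements merged into one kernel-verified Lean document; each statement's English description precedes it below -/
import Mathlib

section
/- Let m ≥ 1 and let X_1, …, X_m be commuting indeterminates over ℚ. Then Σ_{S ⊆ {1,…,m}} (-1)^{|S|} (Σ_{i∈S} X_i)^{m+1} = (-1)^m · ((m+1)!/2) · (Σ_{i=1}^m X_i) · Π_{i=1}^m X_i, with the convention that an empty sum is 0. -/
open MvPolynomial Finset

lemma aux_powerset_sum {α : Type*} [DecidableEq α] {R : Type*} [CommRing R] (s : Finset α) :
    ∑ T ∈ s.powerset, ((-1 : R)) ^ T.card = if s = ∅ then 1 else 0 := by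
  have h := Finset.sum_powerset_neg_one_pow_card (x := s)
  have h2 := congrArg (Int.cast : ℤ → R) h
  push_cast at h2
  simpa [apply_ite (Int.cast : ℤ → R)] using h2

lemma aux_superset_sum {α : Type*} [Fintype α] [DecidableEq α] {R : Type*} [CommRing R]
    (P : Finset α) :
    ∑ S : Finset α, (if P ⊆ S then ((-1 : R)) ^ S.card else 0)
      = if P = Finset.univ then (-1 : R) ^ Fintype.card α else 0 := by
  rw [← Finset.sum_filter]
  rw [Finset.sum_nbij' (i := fun S => S \ P) (j := fun T => P ∪ T)
      (t := Pᶜ.powerset) (g := fun T => (-1 : R) ^ (P.card + T.card))]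
  · simp only [pow_add, ← Finset.mul_sum, aux_powerset_sum]
    by_cases h : P = Finset.univ
    · simp [h, Finset.card_univ]
    · have : Pᶜ ≠ ∅ := by
        simp only [ne_eq, ← Finset.compl_eq_empty_iff] at *
        simpa using h
      simp [h, this]
  · intro S hS
    simp only [Finset.mem_filter] at hS
    simp only [Finset.mem_powerset]
    intro x hx
    simp only [Finset.mem_sdiff] at hx
    simp [hx.2]
  · intro T hT
    simp only [Finset.mem_powerset] at hT
    simp only [Finset.mem_filter, Finset.mem_univ, true_and]
    exact Finset.subset_union_left
  · intro S hS
    simp only [Finset.mem_filter, Finset.mem_univ, true_and] at hS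
    exact Finset.union_sdiff_of_subset hS
  · intro T hT
    simp only [Finset.mem_powerset] at hT
    exact Finset.union_sdiff_cancel_left
      (Finset.disjoint_left.mpr fun x hxP hxT => (Finset.mem_compl.mp (hT hxT)) hxP)
  · intro S hS
    simp only [Finset.mem_filter, Finset.mem_univ, true_and] at hS
    congr 1
    have := Finset.card_le_card hS
    rw [Finset.card_sdiff_of_subset hS]
    omega

lemma aux_pow_expand (m : ℕ) (S : Finset (Fin m)) :
    (∑ i ∈ S, (X i : MvPolynomial (Fin m) ℚ)) ^ (m + 1)
      = ∑ k ∈ Finset.piAntidiag (Finset.univ : Finset (Fin m)) (m + 1),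
          if (Finset.univ.filter fun i => k i ≠ 0) ⊆ S then
            (Nat.multinomial Finset.univ k : MvPolynomial (Fin m) ℚ) * ∏ i, X i ^ k i
          else 0 := by
  rw [Finset.sum_pow_eq_sum_piAntidiag, ← Finset.sum_filter]
  have hsubiff : ∀ k : Fin m → ℕ,
      ((Finset.univ.filter fun i => k i ≠ 0) ⊆ S) ↔ (∀ i, k i ≠ 0 → i ∈ S) := by
    intro k
    constructor
    · intro h i hi
      exact h (Finset.mem_filter.mpr ⟨Finset.mem_univ i, hi⟩)
    · intro h i hi
      exact h i (Finset.mem_filter.mp hi).2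
  have hset : Finset.piAntidiag S (m + 1)
      = (Finset.piAntidiag (Finset.univ : Finset (Fin m)) (m + 1)).filter
          (fun k => (Finset.univ.filter fun i => k i ≠ 0) ⊆ S) := by
    ext k
    rw [Finset.mem_filter, Finset.mem_piAntidiag, Finset.mem_piAntidiag, hsubiff]
    constructor
    · rintro ⟨hsum, hsupp⟩
      refine ⟨⟨?_, fun i _ => Finset.mem_univ i⟩, hsupp⟩
      rw [← Finset.sum_subset (Finset.subset_univ S)
        (fun i _ hiS => by by_contra hne; exact hiS (hsupp i hne))]
      exact hsum
    · rintro ⟨⟨hsum, _⟩, hsupp⟩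
      refine ⟨?_, hsupp⟩
      rw [Finset.sum_subset (Finset.subset_univ S)
        (fun i _ hiS => by by_contra hne; exact hiS (hsupp i hne))]
      exact hsum
  rw [hset]
  refine Finset.sum_congr rfl fun k hk => ?_
  rw [Finset.mem_filter, hsubiff] at hk
  obtain ⟨-, hsupp⟩ := hk
  have hzero : ∀ i ∈ (Finset.univ : Finset (Fin m)), i ∉ S → k i = 0 := by
    intro i _ hiS; by_contra hne; exact hiS (hsupp i hne)
  congr 1
  · unfold Nat.multinomial
    rw [Finset.sum_subset (Finset.subset_univ S) hzero,
      Finset.prod_subset (Finset.subset_univ S) (fun i hi hiS => by rw [hzero i hi hiS]; rfl)]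
  · exact Finset.prod_subset (Finset.subset_univ S)
      (fun i hi hiS => by rw [hzero i hi hiS, pow_zero])

lemma aux_sum_two_ones (m : ℕ) (i : Fin m) :
    ∑ j : Fin m, (if j = i then 2 else 1) = m + 1 := by
  have : (fun j : Fin m => if j = i then 2 else 1)
      = fun j => (if j = i then 1 else 0) + 1 := by funext j; split <;> rfl
  rw [this, Finset.sum_add_distrib, Finset.sum_ite_eq' Finset.univ i (fun _ => 1)]
  simp [add_comm]

lemma aux_filter_image (m : ℕ) :
    (Finset.piAntidiag (Finset.univ : Finset (Fin m)) (m + 1)).filter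
        (fun k => ∀ i, k i ≠ 0)
      = Finset.univ.image (fun i : Fin m => fun j => if j = i then 2 else 1) := by
  ext k
  simp only [Finset.mem_filter, Finset.mem_piAntidiag, Finset.mem_image, Finset.mem_univ,
    true_and, ne_eq]
  constructor
  · rintro ⟨⟨hsum, -⟩, hpos⟩
    have hsum' : ∑ j : Fin m, k j = m + 1 := hsum
    have h1 : ∀ j, 1 ≤ k j := fun j => Nat.one_le_iff_ne_zero.mpr (hpos j)
    have hlt : ∑ j : Fin m, 1 < ∑ j : Fin m, k j := by
      simp only [Finset.sum_const, Finset.card_univ, Fintype.card_fin, smul_eq_mul, mul_one]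
      omega
    obtain ⟨i, -, hi⟩ := Finset.exists_lt_of_sum_lt hlt
    refine ⟨i, funext fun j => ?_⟩
    by_cases hji : j = i
    · rw [if_pos hji]
      subst hji
      have e1 : ∑ l : Fin m, k l = k j + ∑ l ∈ Finset.univ.erase j, k l :=
        (Finset.add_sum_erase Finset.univ k (Finset.mem_univ j)).symm
      have hrest : (Finset.univ.erase j).card ≤ ∑ l ∈ Finset.univ.erase j, k l := by
        simpa using Finset.card_nsmul_le_sum (Finset.univ.erase j) k 1 (fun l _ => h1 l)
      have hcard : (Finset.univ.erase j).card = m - 1 := by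
        rw [Finset.card_erase_of_mem (Finset.mem_univ j), Finset.card_univ, Fintype.card_fin]
      omega
    · simp only [if_neg hji]
      by_contra hne
      have h2 : 2 ≤ k j := by
        have := h1 j; omega
      have hj' : j ∈ Finset.univ.erase i := Finset.mem_erase.mpr ⟨hji, Finset.mem_univ j⟩
      have e1 : ∑ l : Fin m, k l = k i + ∑ l ∈ Finset.univ.erase i, k l :=
        (Finset.add_sum_erase Finset.univ k (Finset.mem_univ i)).symm
      have e2 : ∑ l ∈ Finset.univ.erase i, k l
          = k j + ∑ l ∈ (Finset.univ.erase i).erase j, k l :=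
        (Finset.add_sum_erase _ k hj').symm
      have hrest : ((Finset.univ.erase i).erase j).card
          ≤ ∑ l ∈ (Finset.univ.erase i).erase j, k l := by
        simpa using Finset.card_nsmul_le_sum ((Finset.univ.erase i).erase j) k 1
          (fun l _ => h1 l)
      have hcard : ((Finset.univ.erase i).erase j).card = m - 2 := by
        rw [Finset.card_erase_of_mem hj', Finset.card_erase_of_mem (Finset.mem_univ i),
          Finset.card_univ, Fintype.card_fin]
        omega
      have him : 2 ≤ m := by
        have hc : ({i, j} : Finset (Fin m)).card ≤ m := by
          simpa using Finset.card_le_univ ({i, j} : Finset (Fin m))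
        rwa [Finset.card_pair (fun h => hji h.symm)] at hc
      omega
  · rintro ⟨i, rfl⟩
    exact ⟨⟨aux_sum_two_ones m i, by simp⟩, fun j => by dsimp only; split <;> simp⟩

theorem alt_subset_sum_pow_diag_succ (m : ℕ) (hm : 1 ≤ m) :
    ∑ S : Finset (Fin m),
        (-1) ^ S.card * (∑ i ∈ S, (X i : MvPolynomial (Fin m) ℚ)) ^ (m + 1)
      = C ((-1 : ℚ) ^ m * ((m + 1).factorial : ℚ) / 2)
          * (∑ i : Fin m, X i) * ∏ i : Fin m, X i := by
  have step1 : ∑ S : Finset (Fin m),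
        (-1) ^ S.card * (∑ i ∈ S, (X i : MvPolynomial (Fin m) ℚ)) ^ (m + 1)
      = ∑ k ∈ Finset.piAntidiag (Finset.univ : Finset (Fin m)) (m + 1),
          (∑ S : Finset (Fin m),
            if (Finset.univ.filter fun i => k i ≠ 0) ⊆ S then
              ((-1 : MvPolynomial (Fin m) ℚ)) ^ S.card else 0)
          * ((Nat.multinomial Finset.univ k : MvPolynomial (Fin m) ℚ) * ∏ i, X i ^ k i) := by
    simp_rw [aux_pow_expand, Finset.mul_sum, mul_ite, mul_zero]
    rw [Finset.sum_comm]
    refine Finset.sum_congr rfl fun k _ => ?_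
    rw [Finset.sum_mul]
    refine Finset.sum_congr rfl fun S _ => ?_
    split <;> ring
  rw [step1]
  simp_rw [aux_superset_sum, Fintype.card_fin]
  have hcond : ∀ k : Fin m → ℕ,
      ((Finset.univ.filter fun i => k i ≠ 0) = Finset.univ) ↔ (∀ i, k i ≠ 0) := by
    intro k
    rw [Finset.filter_eq_self]
    simp
  simp_rw [ite_mul, zero_mul]
  rw [Finset.sum_congr rfl (fun k _ => if_congr (hcond k) rfl rfl), ← Finset.sum_filter,
    aux_filter_image m, Finset.sum_image (by
      intro i _ j _ h
      by_contra hne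
      have h2 := congrFun h i
      simp [hne] at h2)]
  have hmult : ∀ i : Fin m, Nat.multinomial (Finset.univ : Finset (Fin m))
      (fun j => if j = i then 2 else 1) = (m + 1).factorial / 2 := by
    intro i
    unfold Nat.multinomial
    have hprod : ∏ j : Fin m, ((if j = i then 2 else 1) : ℕ).factorial = 2 := by
      have : (fun j : Fin m => ((if j = i then 2 else 1) : ℕ).factorial)
          = fun j => if j = i then 2 else 1 := by funext j; split <;> rfl
      rw [this, Finset.prod_ite_eq' Finset.univ i (fun _ => 2)]
      simp
    rw [show (Finset.univ.sum fun j : Fin m => if j = i then 2 else 1) = m + 1 from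
      aux_sum_two_ones m i, hprod]
  have hXprod : ∀ i : Fin m,
      ∏ j : Fin m, (X j : MvPolynomial (Fin m) ℚ) ^ (if j = i then 2 else 1)
        = X i * ∏ j : Fin m, X j := by
    intro i
    have h : ∀ j : Fin m, (X j : MvPolynomial (Fin m) ℚ) ^ (if j = i then 2 else 1)
        = (if j = i then X j else 1) * X j := by
      intro j; split <;> ring
    simp_rw [h]
    rw [Finset.prod_mul_distrib, Finset.prod_ite_eq' Finset.univ i (fun j => (X j))]
    simp
  simp_rw [hmult, hXprod]
  have hcast : (((m + 1).factorial / 2 : ℕ) : ℚ) = ((m + 1).factorial : ℚ) / 2 := by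
    rw [Nat.cast_div (Nat.dvd_factorial (by norm_num) (by omega)) (by norm_num)]
    norm_num
  have hC : (C ((-1 : ℚ) ^ m * ((m + 1).factorial : ℚ) / 2) : MvPolynomial (Fin m) ℚ)
      = (-1) ^ m * (((m + 1).factorial / 2 : ℕ) : MvPolynomial (Fin m) ℚ) := by
    rw [show ((-1 : ℚ) ^ m * ((m + 1).factorial : ℚ) / 2)
        = (-1 : ℚ) ^ m * ((((m + 1).factorial / 2 : ℕ)) : ℚ) from by rw [hcast]; ring]
    rw [map_mul, map_pow, map_neg, map_one, MvPolynomial.C_eq_coe_nat]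
  rw [hC]
  simp only [Finset.sum_mul, Finset.mul_sum]
  exact Finset.sum_congr rfl fun x _ => by ring
end

section
/- Let m ≥ 1 and let X_1, …, X_m be commuting indeterminates over ℚ. Then Σ_{S ⊆ {1,…,m}} (-1)^{|S|} (Σ_{i∈S} X_i)^{m+2} = (-1)^m · (m+2)! · ( (1/4)·Σ_{1≤i<j≤m} X_i X_j + (1/6)·Σ_{i=1}^m X_i^2 ) · Π_{i=1}^m X_i, with the convention that an empty sum is 0. -/
open Finset

lemma aux_powerset_neg {α : Type*} [DecidableEq α] (R : Type*) [CommRing R] (x : Finset α) :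
    ∑ U ∈ x.powerset, (-1 : R) ^ U.card = if x = ∅ then 1 else 0 := by
  have h : ((∑ U ∈ x.powerset, (-1 : ℤ) ^ U.card : ℤ) : R)
      = ∑ U ∈ x.powerset, (-1 : R) ^ U.card := by push_cast; ring
  rw [← h, Finset.sum_powerset_neg_one_pow_card]
  split <;> simp

lemma alt_sum_superset {R : Type*} [CommRing R] {α : Type*} [Fintype α] [DecidableEq α]
    (T : Finset α) (c : R) :
    ∑ S : Finset α, (-1 : R) ^ S.card * (if T ⊆ S then c else 0)
      = if T = univ then (-1) ^ Fintype.card α * c else 0 := by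
  classical
  calc ∑ S : Finset α, (-1 : R) ^ S.card * (if T ⊆ S then c else 0)
      = ∑ S ∈ univ.filter (fun S => T ⊆ S), (-1 : R) ^ S.card * c := by
        simp only [mul_ite, mul_zero]
        rw [← Finset.sum_filter]
    _ = ∑ U ∈ Tᶜ.powerset, (-1 : R) ^ (T.card + U.card) * c := by
        refine (Finset.sum_nbij' (fun S => S \ T) (fun U => T ∪ U) ?_ ?_ ?_ ?_ ?_).symm.symm
        · intro S hS
          have h := (Finset.mem_filter.1 hS).2
          simp only [Finset.mem_powerset]
          intro a ha
          simp only [Finset.mem_sdiff] at ha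
          simp [ha.2]
        · intro U hU
          simp [Finset.subset_union_left]
        · intro S hS
          exact Finset.union_sdiff_of_subset (Finset.mem_filter.1 hS).2
        · intro U hU
          rw [Finset.mem_powerset] at hU
          show (T ∪ U) \ T = U
          rw [Finset.union_sdiff_cancel_left]
          rw [Finset.disjoint_left]
          intro a ha hU'
          exact (Finset.mem_compl.1 (hU hU')) ha
        · intro S hS
          have h := (Finset.mem_filter.1 hS).2
          congr 2
          rw [Finset.card_sdiff_of_subset h]
          have := Finset.card_le_card h
          omega
    _ = (-1 : R) ^ T.card * c * ∑ U ∈ Tᶜ.powerset, (-1 : R) ^ U.card := by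
        rw [Finset.mul_sum]
        refine Finset.sum_congr rfl fun U _ => ?_
        rw [pow_add]; ring
    _ = if T = univ then (-1) ^ Fintype.card α * c else 0 := by
        rw [aux_powerset_neg]
        by_cases h : T = univ
        · have : Tᶜ = ∅ := by simp [h]
          rw [if_pos this, if_pos h, mul_one, h, Finset.card_univ]
        · have : ¬ Tᶜ = ∅ := by
            simp only [Finset.compl_eq_empty_iff]
            exact h
          rw [if_neg this, if_neg h, mul_zero]

open MvPolynomial

lemma piAntidiag_eq_filter {m n : ℕ} (S : Finset (Fin m)) :
    Finset.piAntidiag S n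
      = (Finset.piAntidiag (univ : Finset (Fin m)) n).filter (fun k => ∀ i, k i ≠ 0 → i ∈ S) := by
  ext k
  simp only [Finset.mem_piAntidiag, Finset.mem_filter, Finset.mem_univ, true_implies]
  constructor
  · rintro ⟨hsum, hsupp⟩
    refine ⟨⟨?_, fun i _ => trivial⟩, hsupp⟩
    rw [← hsum]
    exact (Finset.sum_subset (Finset.subset_univ S) (fun i _ hi => by
      by_contra h
      exact hi (hsupp i h))).symm
  · rintro ⟨⟨hsum, _⟩, hsupp⟩
    refine ⟨?_, hsupp⟩
    rw [← hsum]
    exact Finset.sum_subset (Finset.subset_univ S) (fun i _ hi => by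
      by_contra h
      exact hi (hsupp i h))

lemma multinomial_sub_eq {m : ℕ} (S : Finset (Fin m)) (k : Fin m → ℕ)
    (h : ∀ i, k i ≠ 0 → i ∈ S) :
    Nat.multinomial S k = Nat.multinomial (univ : Finset (Fin m)) k := by
  unfold Nat.multinomial
  rw [Finset.sum_subset (Finset.subset_univ S) (fun i _ hi => by
        by_contra hh; exact hi (h i hh)),
      Finset.prod_subset (Finset.subset_univ S) (fun i _ hi => by
        have : k i = 0 := by by_contra hh; exact hi (h i hh)
        simp [this])]

lemma prod_pow_sub_eq {m : ℕ} (S : Finset (Fin m)) (k : Fin m → ℕ)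
    (h : ∀ i, k i ≠ 0 → i ∈ S) :
    ∏ i ∈ S, (X i : MvPolynomial (Fin m) ℚ) ^ k i = ∏ i : Fin m, X i ^ k i := by
  exact Finset.prod_subset (Finset.subset_univ S) (fun i _ hi => by
    have : k i = 0 := by by_contra hh; exact hi (h i hh)
    simp [this])

lemma swap_step (m n : ℕ) :
    ∑ S : Finset (Fin m),
        (-1) ^ S.card * (∑ i ∈ S, (X i : MvPolynomial (Fin m) ℚ)) ^ n
      = ∑ k ∈ (Finset.piAntidiag (univ : Finset (Fin m)) n).filter (fun k => ∀ i, k i ≠ 0),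
          (-1 : MvPolynomial (Fin m) ℚ) ^ m
            * ((Nat.multinomial (univ : Finset (Fin m)) k : MvPolynomial (Fin m) ℚ)
                * ∏ i : Fin m, X i ^ k i) := by
  classical
  have step1 : ∀ S : Finset (Fin m),
      (∑ i ∈ S, (X i : MvPolynomial (Fin m) ℚ)) ^ n
        = ∑ k ∈ Finset.piAntidiag (univ : Finset (Fin m)) n,
            (if univ.filter (fun i => k i ≠ 0) ⊆ S then
              (Nat.multinomial (univ : Finset (Fin m)) k : MvPolynomial (Fin m) ℚ)
                * ∏ i : Fin m, X i ^ k i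
            else 0) := by
    intro S
    rw [Finset.sum_pow_eq_sum_piAntidiag S (fun i => (X i : MvPolynomial (Fin m) ℚ)) n,
        piAntidiag_eq_filter S, Finset.sum_filter]
    refine Finset.sum_congr rfl fun k _ => ?_
    have hiff : (∀ i, k i ≠ 0 → i ∈ S) ↔ univ.filter (fun i => k i ≠ 0) ⊆ S := by
      constructor
      · intro h i hi
        exact h i (Finset.mem_filter.1 hi).2
      · intro h i hi
        exact h (by simpa using hi)
    by_cases h : ∀ i, k i ≠ 0 → i ∈ S
    · rw [if_pos h, if_pos (hiff.1 h), multinomial_sub_eq S k h, prod_pow_sub_eq S k h]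
    · rw [if_neg h, if_neg (fun hh => h (hiff.2 hh))]
  calc ∑ S : Finset (Fin m),
        (-1) ^ S.card * (∑ i ∈ S, (X i : MvPolynomial (Fin m) ℚ)) ^ n
      = ∑ k ∈ Finset.piAntidiag (univ : Finset (Fin m)) n,
          ∑ S : Finset (Fin m), (-1 : MvPolynomial (Fin m) ℚ) ^ S.card *
            (if univ.filter (fun i => k i ≠ 0) ⊆ S then
              (Nat.multinomial (univ : Finset (Fin m)) k : MvPolynomial (Fin m) ℚ)
                * ∏ i : Fin m, X i ^ k i
            else 0) := by
        simp_rw [step1, Finset.mul_sum]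
        rw [Finset.sum_comm]
    _ = ∑ k ∈ Finset.piAntidiag (univ : Finset (Fin m)) n,
          (if univ.filter (fun i => k i ≠ 0) = univ then
            (-1 : MvPolynomial (Fin m) ℚ) ^ m
              * ((Nat.multinomial (univ : Finset (Fin m)) k : MvPolynomial (Fin m) ℚ)
                  * ∏ i : Fin m, X i ^ k i)
          else 0) := by
        refine Finset.sum_congr rfl fun k _ => ?_
        rw [alt_sum_superset]
        simp [Fintype.card_fin]
    _ = _ := by
        rw [Finset.sum_filter]
        refine Finset.sum_congr rfl fun k _ => ?_
        have : (Finset.filter (fun i => k i ≠ 0) univ = univ) ↔ (∀ i : Fin m, k i ≠ 0) := by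
          rw [Finset.filter_eq_self]
          simp
        by_cases h : ∀ i : Fin m, k i ≠ 0
        · rw [if_pos (this.2 h), if_pos h]
        · rw [if_neg (fun hh => h (this.1 hh)), if_neg h]

lemma sum_two_classify {m : ℕ} (g : Fin m → ℕ) (hg : ∑ i, g i = 2) :
    (∃ j, ∀ i, g i = if i = j then 2 else 0) ∨
    (∃ j l, j ≠ l ∧ ∀ i, g i = if i = j ∨ i = l then 1 else 0) := by
  classical
  obtain ⟨j, -, hj⟩ := Finset.exists_ne_zero_of_sum_ne_zero (by rw [hg]; norm_num :
    ∑ i ∈ (univ : Finset (Fin m)), g i ≠ 0)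
  have hsplit : g j + ∑ i ∈ univ.erase j, g i = 2 := by
    rw [Finset.add_sum_erase _ g (Finset.mem_univ j), hg]
  by_cases h2 : 2 ≤ g j
  · left
    refine ⟨j, fun i => ?_⟩
    have hgj : g j = 2 := by omega
    have hrest : ∑ i ∈ univ.erase j, g i = 0 := by omega
    by_cases hij : i = j
    · simp [hij, hgj]
    · rw [if_neg hij]
      exact (Finset.sum_eq_zero_iff.1 hrest) i (Finset.mem_erase.2 ⟨hij, Finset.mem_univ i⟩)
  · right
    have hgj : g j = 1 := by omega
    have hrest : ∑ i ∈ univ.erase j, g i = 1 := by omega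
    obtain ⟨l, hl, hlne⟩ := Finset.exists_ne_zero_of_sum_ne_zero (by rw [hrest]; norm_num :
      ∑ i ∈ univ.erase j, g i ≠ 0)
    have hlj : l ≠ j := (Finset.mem_erase.1 hl).1
    have hsplit2 : g l + ∑ i ∈ (univ.erase j).erase l, g i = 1 := by
      rw [Finset.add_sum_erase _ g hl, hrest]
    have hgl : g l = 1 := by omega
    have hrest2 : ∑ i ∈ (univ.erase j).erase l, g i = 0 := by omega
    refine ⟨j, l, hlj.symm, fun i => ?_⟩
    by_cases hij : i = j
    · simp [hij, hgj]
    · by_cases hil : i = l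
      · simp [hil, hgl]
      · rw [if_neg (by tauto)]
        exact (Finset.sum_eq_zero_iff.1 hrest2) i
          (Finset.mem_erase.2 ⟨hil, Finset.mem_erase.2 ⟨hij, Finset.mem_univ i⟩⟩)

lemma classify {m : ℕ} (k : Fin m → ℕ) (hk : ∑ i, k i = m + 2) (h1 : ∀ i, k i ≠ 0) :
    (∃ j, k = fun i => if i = j then 3 else 1) ∨
    (∃ j l, j < l ∧ k = fun i => if i = j ∨ i = l then 2 else 1) := by
  classical
  set g : Fin m → ℕ := fun i => k i - 1 with hgdef
  have hk1 : ∀ i, k i = g i + 1 := fun i => by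
    have := h1 i; simp only [hgdef]; omega
  have hgsum : ∑ i, g i = 2 := by
    have : ∑ i, k i = (∑ i, g i) + m := by
      simp_rw [hk1]
      rw [Finset.sum_add_distrib]
      simp [Finset.card_univ]
    omega
  rcases sum_two_classify g hgsum with ⟨j, hj⟩ | ⟨j, l, hne, hjl⟩
  · left
    refine ⟨j, funext fun i => ?_⟩
    have := hj i
    rw [hk1 i, this]
    split_ifs <;> rfl
  · right
    rcases lt_or_gt_of_ne hne with h | h
    · refine ⟨j, l, h, funext fun i => ?_⟩
      have := hjl i
      rw [hk1 i, this]
      split_ifs <;> rfl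
    · refine ⟨l, j, h, funext fun i => ?_⟩
      have := hjl i
      rw [hk1 i, this]
      split_ifs with h1 h2 h2 <;> first | rfl | (exfalso; tauto)

lemma f3_mem {m : ℕ} (j : Fin m) :
    (fun i => if i = j then 3 else 1)
      ∈ (Finset.piAntidiag (univ : Finset (Fin m)) (m+2)).filter (fun k => ∀ i, k i ≠ 0) := by
  classical
  simp only [Finset.mem_filter, Finset.mem_piAntidiag]
  refine ⟨⟨?_, fun i _ => Finset.mem_univ i⟩, fun i => by split_ifs <;> omega⟩
  have h : ∀ i : Fin m, (if i = j then 3 else 1) = (if i = j then 2 else 0) + 1 := by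
    intro i; split_ifs <;> rfl
  rw [Finset.sum_congr rfl (fun i _ => h i), Finset.sum_add_distrib]
  simp [Finset.sum_ite_eq', Finset.card_univ]
  omega

lemma f22_mem {m : ℕ} (p : Fin m × Fin m) (hp : p.1 ≠ p.2) :
    (fun i => if i = p.1 ∨ i = p.2 then 2 else 1)
      ∈ (Finset.piAntidiag (univ : Finset (Fin m)) (m+2)).filter (fun k => ∀ i, k i ≠ 0) := by
  classical
  simp only [Finset.mem_filter, Finset.mem_piAntidiag]
  refine ⟨⟨?_, fun i _ => Finset.mem_univ i⟩, fun i => by split_ifs <;> omega⟩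
  have h : ∀ i : Fin m, (if i = p.1 ∨ i = p.2 then 2 else 1)
      = ((if i = p.1 then 1 else 0) + (if i = p.2 then 1 else 0)) + 1 := by
    intro i
    by_cases h1 : i = p.1 <;> by_cases h2 : i = p.2 <;> simp [h1, h2] <;> omega
  rw [Finset.sum_congr rfl (fun i _ => h i), Finset.sum_add_distrib, Finset.sum_add_distrib]
  simp [Finset.sum_ite_eq', Finset.card_univ]
  omega

lemma sum_over_A {M : Type*} [AddCommMonoid M] {m : ℕ} (F : (Fin m → ℕ) → M) :
    ∑ k ∈ (Finset.piAntidiag (univ : Finset (Fin m)) (m+2)).filter (fun k => ∀ i, k i ≠ 0), F k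
      = (∑ j : Fin m, F (fun i => if i = j then 3 else 1))
        + ∑ p ∈ univ.filter (fun p : Fin m × Fin m => p.1 < p.2),
            F (fun i => if i = p.1 ∨ i = p.2 then 2 else 1) := by
  classical
  have hA : (Finset.piAntidiag (univ : Finset (Fin m)) (m+2)).filter (fun k => ∀ i, k i ≠ 0)
      = (univ.image (fun j : Fin m => fun i => if i = j then 3 else 1))
        ∪ ((univ.filter (fun p : Fin m × Fin m => p.1 < p.2)).image
            (fun p => fun i => if i = p.1 ∨ i = p.2 then 2 else 1)) := by
    ext k
    constructor
    · intro hk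
      simp only [Finset.mem_filter, Finset.mem_piAntidiag] at hk
      obtain ⟨⟨hsum, -⟩, h1⟩ := hk
      rcases classify k hsum h1 with ⟨j, hj⟩ | ⟨j, l, hlt, hjl⟩
      · exact Finset.mem_union_left _ (Finset.mem_image.2 ⟨j, Finset.mem_univ j, hj.symm⟩)
      · exact Finset.mem_union_right _ (Finset.mem_image.2
          ⟨(j, l), Finset.mem_filter.2 ⟨Finset.mem_univ _, hlt⟩, hjl.symm⟩)
    · intro hk
      rcases Finset.mem_union.1 hk with h | h
      · obtain ⟨j, -, hj⟩ := Finset.mem_image.1 h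
        exact hj ▸ f3_mem j
      · obtain ⟨p, hp, hp2⟩ := Finset.mem_image.1 h
        exact hp2 ▸ f22_mem p (ne_of_lt (Finset.mem_filter.1 hp).2)
  have hdisj : Disjoint
      (univ.image (fun j : Fin m => fun i => if i = j then 3 else 1))
      ((univ.filter (fun p : Fin m × Fin m => p.1 < p.2)).image
          (fun p => fun i => if i = p.1 ∨ i = p.2 then 2 else 1)) := by
    rw [Finset.disjoint_left]
    intro k hk1 hk2
    obtain ⟨j, -, hj⟩ := Finset.mem_image.1 hk1
    obtain ⟨p, -, hp⟩ := Finset.mem_image.1 hk2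
    have h3 : k j = 3 := by rw [← hj]; simp
    have : k j ≤ 2 := by rw [← hp]; dsimp only; split_ifs <;> omega
    omega
  have hinj3 : Set.InjOn (fun j : Fin m => fun i => if i = j then 3 else 1)
      (univ : Finset (Fin m)) := by
    intro a _ b _ hab
    by_contra hne
    have := congrFun hab a
    simp [hne] at this
  have hinj22 : Set.InjOn (fun p : Fin m × Fin m => fun i => if i = p.1 ∨ i = p.2 then 2 else 1)
      (univ.filter (fun p : Fin m × Fin m => p.1 < p.2) : Finset (Fin m × Fin m)) := by
    intro a ha b hb hab
    simp only [Finset.coe_filter, Set.mem_setOf_eq] at ha hb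
    have halt := ha.2
    have hblt := hb.2
    have key : ∀ i, (i = a.1 ∨ i = a.2) ↔ (i = b.1 ∨ i = b.2) := by
      intro i
      have hthis := congrFun hab i
      dsimp only at hthis
      by_cases h1 : i = a.1 ∨ i = a.2 <;> by_cases h2 : i = b.1 ∨ i = b.2
      · exact iff_of_true h1 h2
      · rw [if_pos h1, if_neg h2] at hthis; omega
      · rw [if_neg h1, if_pos h2] at hthis; omega
      · exact iff_of_false h1 h2
    have c1 := (key a.1).1 (Or.inl rfl)
    have c2 := (key a.2).1 (Or.inr rfl)
    rcases c1 with h1 | h1 <;> rcases c2 with h2 | h2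
    · exact absurd (h1.trans h2.symm) (ne_of_lt halt)
    · exact Prod.ext h1 h2
    · exfalso
      have h3 : b.1 < a.1 := by rw [h1]; exact hblt
      have h4 : a.1 < b.1 := by rw [← h2]; exact halt
      exact lt_irrefl _ (h3.trans h4)
    · exact absurd (h1.trans h2.symm) (ne_of_lt halt)
  rw [hA, Finset.sum_union hdisj, Finset.sum_image hinj3, Finset.sum_image hinj22]

lemma mult3 {m : ℕ} (j : Fin m) :
    ((Nat.multinomial (univ : Finset (Fin m)) (fun i => if i = j then 3 else 1)) : ℚ)
      = ((m + 2).factorial : ℚ) / 6 := by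
  classical
  have hspec := Nat.multinomial_spec (univ : Finset (Fin m)) (fun i => if i = j then 3 else 1)
  have hmem := f3_mem j
  simp only [Finset.mem_filter, Finset.mem_piAntidiag] at hmem
  have hsum := hmem.1.1
  have hprod : ∏ i : Fin m, (if i = j then 3 else 1).factorial = 6 := by
    have h : ∀ i : Fin m, ((if i = j then (3:ℕ) else 1)).factorial = if i = j then 6 else 1 := by
      intro i; split_ifs <;> rfl
    rw [Finset.prod_congr rfl (fun i _ => h i), Finset.prod_ite_eq']
    simp
  rw [hsum, hprod] at hspec
  have hq : (6 : ℚ) * (Nat.multinomial (univ : Finset (Fin m)) (fun i => if i = j then 3 else 1) : ℚ)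
      = ((m + 2).factorial : ℚ) := by exact_mod_cast congrArg (Nat.cast : ℕ → ℚ) hspec
  field_simp
  linarith

lemma mult22 {m : ℕ} (p : Fin m × Fin m) (hp : p.1 ≠ p.2) :
    ((Nat.multinomial (univ : Finset (Fin m)) (fun i => if i = p.1 ∨ i = p.2 then 2 else 1)) : ℚ)
      = ((m + 2).factorial : ℚ) / 4 := by
  classical
  have hspec := Nat.multinomial_spec (univ : Finset (Fin m))
    (fun i => if i = p.1 ∨ i = p.2 then 2 else 1)
  have hmem := f22_mem p hp
  simp only [Finset.mem_filter, Finset.mem_piAntidiag] at hmem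
  have hsum := hmem.1.1
  have hprod : ∏ i : Fin m, (if i = p.1 ∨ i = p.2 then (2:ℕ) else 1).factorial = 4 := by
    have h : ∀ i : Fin m, ((if i = p.1 ∨ i = p.2 then (2:ℕ) else 1)).factorial
        = (if i = p.1 then 2 else 1) * (if i = p.2 then 2 else 1) := by
      intro i
      by_cases h1 : i = p.1 <;> by_cases h2 : i = p.2
      · exact absurd (h1.symm.trans h2) hp
      · subst h1; simp [hp]
      · subst h2; simp [Ne.symm hp]
      · simp [h1, h2]
    rw [Finset.prod_congr rfl (fun i _ => h i), Finset.prod_mul_distrib,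
      Finset.prod_ite_eq', Finset.prod_ite_eq']
    simp
  rw [hsum, hprod] at hspec
  have hq : (4 : ℚ) * (Nat.multinomial (univ : Finset (Fin m))
        (fun i => if i = p.1 ∨ i = p.2 then 2 else 1) : ℚ)
      = ((m + 2).factorial : ℚ) := by exact_mod_cast congrArg (Nat.cast : ℕ → ℚ) hspec
  field_simp
  linarith

lemma prodX3 {m : ℕ} (j : Fin m) :
    ∏ i : Fin m, (X i : MvPolynomial (Fin m) ℚ) ^ (if i = j then 3 else 1)
      = X j ^ 2 * ∏ i : Fin m, X i := by
  classical
  have h : ∀ i : Fin m, (X i : MvPolynomial (Fin m) ℚ) ^ (if i = j then 3 else 1)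
      = (if i = j then X i ^ 2 else 1) * X i := by
    intro i; split_ifs <;> ring
  rw [Finset.prod_congr rfl (fun i _ => h i), Finset.prod_mul_distrib, Finset.prod_ite_eq']
  simp

lemma prodX22 {m : ℕ} (p : Fin m × Fin m) (hp : p.1 ≠ p.2) :
    ∏ i : Fin m, (X i : MvPolynomial (Fin m) ℚ) ^ (if i = p.1 ∨ i = p.2 then 2 else 1)
      = X p.1 * X p.2 * ∏ i : Fin m, X i := by
  classical
  have h : ∀ i : Fin m, (X i : MvPolynomial (Fin m) ℚ) ^ (if i = p.1 ∨ i = p.2 then 2 else 1)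
      = ((if i = p.1 then X i else 1) * (if i = p.2 then X i else 1)) * X i := by
    intro i
    by_cases h1 : i = p.1 <;> by_cases h2 : i = p.2
    · exact absurd (h1.symm.trans h2) hp
    · subst h1; simp [hp]; ring
    · subst h2; simp [Ne.symm hp]; ring
    · simp [h1, h2]
  rw [Finset.prod_congr rfl (fun i _ => h i), Finset.prod_mul_distrib,
    Finset.prod_mul_distrib, Finset.prod_ite_eq', Finset.prod_ite_eq']
  simp [pow_two]

theorem alt_subset_sum_pow_diag_succ_succ (m : ℕ) (hm : 1 ≤ m) :
    ∑ S : Finset (Fin m),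
        (-1) ^ S.card * (∑ i ∈ S, (X i : MvPolynomial (Fin m) ℚ)) ^ (m + 2)
      = C ((-1 : ℚ) ^ m * ((m + 2).factorial : ℚ))
          * (C ((1 : ℚ) / 4)
              * (∑ p ∈ Finset.univ.filter (fun p : Fin m × Fin m => p.1 < p.2),
                  X p.1 * X p.2)
            + C ((1 : ℚ) / 6) * ∑ i : Fin m, X i ^ 2)
          * ∏ i : Fin m, X i := by
  classical
  rw [swap_step m (m + 2), sum_over_A]
  have hterm3 : ∀ j : Fin m,
      (-1 : MvPolynomial (Fin m) ℚ) ^ m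
          * ((Nat.multinomial (univ : Finset (Fin m)) (fun i => if i = j then 3 else 1) :
              MvPolynomial (Fin m) ℚ)
            * ∏ i : Fin m, X i ^ (if i = j then 3 else 1))
        = C ((-1 : ℚ) ^ m * ((m + 2).factorial : ℚ) * (1 / 6)) * (X j ^ 2 * ∏ i : Fin m, X i) := by
    intro j
    rw [prodX3 j]
    have hcast : (Nat.multinomial (univ : Finset (Fin m)) (fun i => if i = j then 3 else 1) :
        MvPolynomial (Fin m) ℚ) = C (((m + 2).factorial : ℚ) / 6) := by
      rw [← mult3 j]
      simp [MvPolynomial.C_eq_coe_nat]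
    rw [hcast]
    have hneg : (-1 : MvPolynomial (Fin m) ℚ) ^ m = C ((-1 : ℚ) ^ m) := by
      simp
    rw [hneg, ← mul_assoc, ← C_mul]
    congr 1
    ring
  have hterm22 : ∀ p ∈ Finset.univ.filter (fun p : Fin m × Fin m => p.1 < p.2),
      (-1 : MvPolynomial (Fin m) ℚ) ^ m
          * ((Nat.multinomial (univ : Finset (Fin m))
                (fun i => if i = p.1 ∨ i = p.2 then 2 else 1) : MvPolynomial (Fin m) ℚ)
            * ∏ i : Fin m, X i ^ (if i = p.1 ∨ i = p.2 then 2 else 1))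
        = C ((-1 : ℚ) ^ m * ((m + 2).factorial : ℚ) * (1 / 4))
            * (X p.1 * X p.2 * ∏ i : Fin m, X i) := by
    intro p hp
    have hpne : p.1 ≠ p.2 := ne_of_lt (Finset.mem_filter.1 hp).2
    rw [prodX22 p hpne]
    have hcast : (Nat.multinomial (univ : Finset (Fin m))
          (fun i => if i = p.1 ∨ i = p.2 then 2 else 1) : MvPolynomial (Fin m) ℚ)
        = C (((m + 2).factorial : ℚ) / 4) := by
      rw [← mult22 p hpne]
      simp [MvPolynomial.C_eq_coe_nat]
    rw [hcast]
    have hneg : (-1 : MvPolynomial (Fin m) ℚ) ^ m = C ((-1 : ℚ) ^ m) := by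
      simp
    rw [hneg, ← mul_assoc, ← C_mul]
    congr 1
    ring
  rw [Finset.sum_congr rfl (fun j _ => hterm3 j), Finset.sum_congr rfl hterm22]
  rw [mul_add, add_mul, add_comm]
  congr 1
  · simp only [Finset.mul_sum, Finset.sum_mul]
    refine Finset.sum_congr rfl fun p _ => ?_
    rw [C_mul]
    ring
  · simp only [Finset.mul_sum, Finset.sum_mul]
    refine Finset.sum_congr rfl fun j _ => ?_
    rw [C_mul]
    ring
end

section
/- For every integer n ≥ 2 and every rational number d, the identity Σ_{k=0}^{n-1} (-1)^{n+k+1} · C(n-1,k) · binom(kd−1, n) = d^{n-1}·((n−1)d − (n+1))/2 holds, i.e., the quantity A_0 from the Euler characteristic computation of a complete intersection surface equals d^{n-1}·e'/2 with e' = (n−1)d − n − 1. -/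
open Finset Polynomial fwdDiff

lemma fwdDiff_pow (j : ℕ) :
    Δ_[(1:ℚ)] (fun x : ℚ => x ^ j) = fun x => ∑ i ∈ range j, (j.choose i : ℚ) * x ^ i := by
  funext x
  rw [fwdDiff, add_pow, Finset.sum_range_succ]
  simp [mul_comm]

lemma pow_sum_smul (j : ℕ) :
    (fun x : ℚ => ∑ i ∈ range j, (j.choose i : ℚ) * x ^ i)
      = ∑ i ∈ range j, (j.choose i : ℚ) • (fun x : ℚ => x ^ i) := by
  funext x
  simp [Finset.sum_apply]

lemma iter_pow_lt : ∀ m : ℕ, ∀ j < m, (Δ_[(1:ℚ)])^[m] (fun x : ℚ => x ^ j) = fun _ => 0 := by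
  intro m
  induction m with
  | zero => omega
  | succ m ih =>
    intro j hj
    rw [Function.iterate_succ_apply, fwdDiff_pow, pow_sum_smul, fwdDiff_iter_finset_sum]
    funext y
    rw [Finset.sum_apply]
    apply Finset.sum_eq_zero
    intro i hi
    rw [fwdDiff_iter_const_smul, ih i (by simp at hi; omega)]
    simp

lemma iter_pow_self (m : ℕ) :
    (Δ_[(1:ℚ)])^[m] (fun x : ℚ => x ^ m) = fun _ => (m.factorial : ℚ) := by
  induction m with
  | zero => funext x; simp
  | succ m ih =>
    rw [Function.iterate_succ_apply, fwdDiff_pow, pow_sum_smul, fwdDiff_iter_finset_sum]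
    funext y
    rw [Finset.sum_apply, Finset.sum_range_succ]
    have hz : ∀ i ∈ range m, ((m+1).choose i : ℚ) • (Δ_[(1:ℚ)])^[m] (fun x : ℚ => x ^ i) y = 0 := by
      intro i hi
      rw [iter_pow_lt m i (by simpa using hi)]
      simp
    rw [Finset.sum_eq_zero (by simpa using hz)]
    rw [fwdDiff_iter_const_smul, ih]
    simp [Nat.factorial_succ, Nat.choose_succ_self_right]
    try ring

lemma iter_pow_succ (m : ℕ) :
    (Δ_[(1:ℚ)])^[m] (fun x : ℚ => x ^ (m+1)) 0 = (m.factorial : ℚ) * (m * (m+1)) / 2 := by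
  induction m with
  | zero => simp
  | succ m ih =>
    rw [Function.iterate_succ_apply, fwdDiff_pow, pow_sum_smul, fwdDiff_iter_finset_sum]
    rw [Finset.sum_apply, Finset.sum_range_succ, Finset.sum_range_succ]
    have hz : ∀ i ∈ range m, ((m+2).choose i : ℚ) • (Δ_[(1:ℚ)])^[m] (fun x : ℚ => x ^ i) 0 = 0 := by
      intro i hi
      rw [iter_pow_lt m i (by simpa using hi)]
      simp
    rw [Finset.sum_eq_zero (by simpa [Nat.add_assoc] using hz)]
    rw [fwdDiff_iter_const_smul, fwdDiff_iter_const_smul, iter_pow_self m]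
    have h1 : ((m+2).choose (m+1) : ℚ) = (m : ℚ) + 2 := by
      rw [show m+2 = (m+1)+1 from rfl, Nat.choose_succ_self_right]; push_cast; ring
    have h2 : ((m+2).choose m : ℚ) = ((m:ℚ)+2) * ((m:ℚ)+1) / 2 := by
      rw [show (m+2).choose m = (m+2).choose 2 from by
        rw [← Nat.choose_symm (show 2 ≤ m+2 by omega)]
        congr 1]
      rw [Nat.cast_choose_two]
      push_cast; ring
    simp only [smul_eq_mul, Pi.smul_apply]
    rw [ih, h1, h2]
    push_cast [Nat.factorial_succ]
    ring

lemma key (m : ℕ) (d : ℚ) :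
    (Δ_[(1:ℚ)])^[m+1] (fun x : ℚ => ∏ i ∈ range (m+2), (x * d - (1 + i))) 0
      = ((m+2).factorial : ℚ) * (d ^ (m+1) * (((m:ℚ)+1) * d - ((m:ℚ)+3)) / 2) := by
  set q : Polynomial ℚ := ∏ i ∈ range (m+2), (X - C ((1:ℚ) + i)) with hq
  have hmon : q.Monic := monic_prod_of_monic _ _ fun i _ => monic_X_sub_C _
  have hdeg : q.natDegree = m + 2 := by
    rw [hq, natDegree_prod_of_monic _ _ fun i _ => monic_X_sub_C _]
    simp only [natDegree_X_sub_C]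
    rw [Finset.sum_const, smul_eq_mul, mul_one, Finset.card_range]
  have hfun : (fun x : ℚ => ∏ i ∈ range (m+2), (x * d - (1 + i)))
      = ∑ j ∈ range (m+3), (q.coeff j * d ^ j) • (fun x : ℚ => x ^ j) := by
    funext x
    have he : q.eval (x * d) = ∏ i ∈ range (m+2), (x * d - (1 + i)) := by
      simp [hq, eval_prod]
    rw [← he, eval_eq_sum_range' (by omega : q.natDegree < m+3), Finset.sum_apply]
    apply Finset.sum_congr rfl
    intro j _
    simp [mul_pow]
    ring
  rw [hfun, fwdDiff_iter_finset_sum, Finset.sum_apply]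
  have hterm : ∀ j ∈ range (m+3),
      (Δ_[(1:ℚ)])^[m+1] ((q.coeff j * d ^ j) • fun x : ℚ => x ^ j) 0
      = (q.coeff j * d ^ j) * ((Δ_[(1:ℚ)])^[m+1] (fun x : ℚ => x ^ j) 0) := by
    intro j _
    rw [fwdDiff_iter_const_smul]
    simp
  rw [Finset.sum_congr rfl hterm, Finset.sum_range_succ, Finset.sum_range_succ]
  rw [Finset.sum_eq_zero (fun j hj => by
    rw [iter_pow_lt (m+1) j (by simpa using hj)]; simp)]
  have h2 := iter_pow_self (m+1)
  have h3 := iter_pow_succ (m+1)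
  rw [show m+1+1 = m+2 from rfl] at h3
  rw [h2, h3]
  have hc2 : q.coeff (m+2) = 1 := by
    have := hmon.coeff_natDegree
    rwa [hdeg] at this
  have hc1 : q.coeff (m+1) = -(((m:ℚ)+2) * ((m:ℚ)+3) / 2) := by
    have h := prod_X_sub_C_nextCoeff (s := range (m+2)) (fun i => (1:ℚ) + i)
    rw [← hq, nextCoeff, hdeg] at h
    norm_num at h
    rw [h]
    have hs2 : ((∑ i ∈ range (m+2), i : ℕ) : ℚ) * 2 = ((m:ℚ)+2) * ((m:ℚ)+1) := by
      rw_mod_cast [Finset.sum_range_id_mul_two]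
      push_cast
      ring
    rw [Finset.sum_add_distrib, Finset.sum_const, Finset.card_range]
    simp only [nsmul_eq_mul, mul_one]
    push_cast at hs2 ⊢
    linarith [hs2]
  rw [hc1, hc2]
  rw [show (m+2).factorial = (m+2) * (m+1).factorial from rfl]
  push_cast
  ring

/-- The generalized binomial coefficient `binom(x, n) = x(x-1)⋯(x-n+1)/n!` for `x : ℚ`. -/
def gbinom (x : ℚ) (n : ℕ) : ℚ :=
  (∏ i ∈ Finset.range n, (x - i)) / (n.factorial : ℚ)

theorem A0_closed_form (n : ℕ) (hn : 2 ≤ n) (d : ℚ) :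
    ∑ k ∈ Finset.range n,
        (-1) ^ (n + k + 1) * ((n - 1).choose k : ℚ) * gbinom ((k : ℚ) * d - 1) n
      = d ^ (n - 1) * (((n : ℚ) - 1) * d - ((n : ℚ) + 1)) / 2 := by
  obtain ⟨m, rfl⟩ : ∃ m, n = m + 2 := ⟨n - 2, by omega⟩
  have hshift := fwdDiff_iter_eq_sum_shift (1:ℚ)
      (fun x : ℚ => ∏ i ∈ range (m+2), (x * d - (1 + i))) (m+1) 0
  rw [key m d] at hshift
  simp only [show m+1+1 = m+2 from rfl] at hshift
  have hterm : ∀ k ∈ range (m+2),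
      (-1:ℚ) ^ (m+2+k+1) * (((m+2-1).choose k : ℕ) : ℚ) * gbinom ((k : ℚ) * d - 1) (m+2)
      = (((-1:ℤ) ^ (m+1-k) * ((m+1).choose k) : ℤ) •
          (fun x : ℚ => ∏ i ∈ range (m+2), (x * d - (1 + i))) ((0:ℚ) + k • (1:ℚ)))
          / ((m+2).factorial : ℚ) := by
    intro k hk
    have hk' : k ≤ m+1 := by
      have := Finset.mem_range.mp hk
      omega
    have hsign : ((-1:ℚ)) ^ (m+2+k+1) = ((-1:ℚ)) ^ (m+1-k) := by
      have he : m+2+k+1 = (m+1-k) + 2*(k+1) := by omega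
      rw [he, pow_add, pow_mul]
      norm_num
    have harg : ((0:ℚ) + (k : ℕ) • (1:ℚ)) = (k:ℚ) := by simp
    have hprod : gbinom ((k : ℚ) * d - 1) (m+2)
        = (∏ i ∈ range (m+2), ((k:ℚ) * d - (1 + i))) / ((m+2).factorial : ℚ) := by
      unfold gbinom
      congr 1
      apply Finset.prod_congr rfl
      intro i _
      ring
    simp only [harg]
    rw [hprod, zsmul_eq_mul, hsign, show m+2-1 = m+1 from rfl]
    push_cast
    ring
  rw [Finset.sum_congr rfl hterm, ← Finset.sum_div, ← hshift]
  have hfac : ((m+2).factorial : ℚ) ≠ 0 := by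
    exact_mod_cast Nat.factorial_ne_zero (m+2)
  rw [show m+2-1 = m+1 from rfl]
  push_cast
  field_simp
  ring
end

section
/- For every integer n ≥ 2 and every rational number d, the identity Σ_{k=0}^{n-1} (-1)^{n+k+1} · C(n−2, k−1) · binom(kd−1, n) = ((3n−2)d − (3n+2))/24 · d^{n-2}·(d−1)·(n+1) holds, where C(n−2, k−1) := 0 for k = 0; i.e., the quantity A_2 from the Euler characteristic computation of a complete intersection surface has the stated closed form. -/
open Finset

lemma gbinom_eq_choose (x : ℚ) (n : ℕ) : gbinom x n = Ring.choose x n := by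
  have h1 : (descPochhammer ℤ n).smeval x = ∏ i ∈ range n, (x - i) := by
    induction n with
    | zero => simp [descPochhammer_zero, Polynomial.smeval_one]
    | succ n ih =>
      rw [descPochhammer_succ_right, Polynomial.smeval_mul, ih, prod_range_succ,
        Polynomial.smeval_sub, Polynomial.smeval_X, Polynomial.smeval_natCast]
      ring
  have h2 := Ring.descPochhammer_eq_factorial_smul_choose x n
  rw [gbinom, ← h1, h2, nsmul_eq_mul]
  field_simp

lemma gbinom_add (x y : ℚ) (r : ℕ) :
    gbinom (x + y) r = ∑ i ∈ range (r + 1), gbinom x i * gbinom y (r - i) := by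
  simp only [gbinom_eq_choose]
  rw [Ring.add_choose_eq r (Commute.all x y),
    Finset.Nat.sum_antidiagonal_eq_sum_range_succ (fun a b => Ring.choose x a * Ring.choose y b)]

lemma gbinom_x_zero (x : ℚ) : gbinom x 0 = 1 := by simp [gbinom]
lemma gbinom_x_one (x : ℚ) : gbinom x 1 = x := by simp [gbinom]
lemma gbinom_x_two (x : ℚ) : gbinom x 2 = x * (x - 1) / 2 := by
  simp [gbinom, prod_range_succ, Nat.factorial]
lemma gbinom_x_three (x : ℚ) : gbinom x 3 = x * (x - 1) * (x - 2) / 6 := by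
  simp [gbinom, prod_range_succ, Nat.factorial]

lemma gbinom_zero_x (r : ℕ) (hr : r ≠ 0) : gbinom 0 r = 0 := by
  rw [gbinom, Finset.prod_eq_zero (Finset.mem_range.mpr (Nat.pos_of_ne_zero hr)) (by norm_num),
    zero_div]

/-- The key auxiliary alternating sum. -/
def Fa (m r : ℕ) (d : ℚ) : ℚ := ∑ j ∈ range (m + 1), (-1) ^ j * (m.choose j) * gbinom (j * d) r

lemma Fa_succ (m r : ℕ) (d : ℚ) :
    Fa (m + 1) r d = -∑ i ∈ range r, gbinom d (i + 1) * Fa m (r - (i + 1)) d := by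
  have key : ∀ j : ℕ, gbinom ((j + 1 : ℕ) * d) r
      = ∑ i ∈ range (r + 1), gbinom d i * gbinom (j * d) (r - i) := by
    intro j
    have : ((j + 1 : ℕ) : ℚ) * d = d + (j : ℚ) * d := by push_cast; ring
    rw [this, gbinom_add]
  have hswap : ∑ j ∈ range (m + 1), (-1 : ℚ) ^ j * (m.choose j) * gbinom ((j + 1 : ℕ) * d) r
      = ∑ i ∈ range (r + 1), gbinom d i * Fa m (r - i) d := by
    simp only [key, Finset.mul_sum]
    rw [Finset.sum_comm]
    refine Finset.sum_congr rfl fun i _ => ?_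
    rw [Fa, Finset.mul_sum]
    refine Finset.sum_congr rfl fun j _ => ?_
    ring
  have hpeel : ∑ i ∈ range (r + 1), gbinom d i * Fa m (r - i) d
      = (∑ i ∈ range r, gbinom d (i + 1) * Fa m (r - (i + 1)) d) + Fa m r d := by
    rw [Finset.sum_range_succ']
    simp [gbinom_x_zero]
  -- expand LHS via Pascal
  rw [Fa, Finset.sum_range_succ']
  have h0 : (-1 : ℚ) ^ 0 * ((m + 1).choose 0 : ℚ) * gbinom ((0 : ℕ) * d) r
      = ((1 : ℚ) * (m.choose 0 : ℚ)) * gbinom ((0 : ℕ) * d) r := by norm_num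
  have hsplit : ∀ j ∈ range (m + 1),
      (-1 : ℚ) ^ (j + 1) * (((m + 1).choose (j + 1) : ℕ) : ℚ) * gbinom ((j + 1 : ℕ) * d) r
      = (-1) ^ (j + 1) * (m.choose j : ℚ) * gbinom ((j + 1 : ℕ) * d) r
        + (-1) ^ (j + 1) * (m.choose (j + 1) : ℚ) * gbinom ((j + 1 : ℕ) * d) r := by
    intro j _
    rw [Nat.choose_succ_succ]
    push_cast
    ring
  rw [Finset.sum_congr rfl hsplit, Finset.sum_add_distrib]
  -- second part + j=0 term reassembles to Fa m r d
  have hB : (∑ j ∈ range (m + 1), (-1 : ℚ) ^ (j + 1) * (m.choose (j + 1) : ℚ)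
        * gbinom ((j + 1 : ℕ) * d) r)
      + (-1 : ℚ) ^ 0 * (((m + 1).choose 0 : ℕ) : ℚ) * gbinom ((0 : ℕ) * d) r
      = Fa m r d := by
    conv_lhs => rw [Finset.sum_range_succ]
    rw [Fa, Finset.sum_range_succ']
    simp [Nat.choose_succ_self]
  have hA : ∑ j ∈ range (m + 1), (-1 : ℚ) ^ (j + 1) * (m.choose j : ℚ)
        * gbinom ((j + 1 : ℕ) * d) r
      = -∑ j ∈ range (m + 1), (-1 : ℚ) ^ j * (m.choose j : ℚ) * gbinom ((j + 1 : ℕ) * d) r := by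
    rw [← Finset.sum_neg_distrib]
    refine Finset.sum_congr rfl fun j _ => ?_
    rw [pow_succ]
    ring
  linear_combination hA - hswap - hpeel + hB

lemma Fa_eq_zero (m : ℕ) : ∀ r : ℕ, r < m → ∀ d : ℚ, Fa m r d = 0 := by
  induction m with
  | zero => omega
  | succ m ih =>
    intro r hr d
    rw [Fa_succ, Finset.sum_eq_zero, neg_zero]
    intro i hi
    have hi' := Finset.mem_range.mp hi
    rw [ih _ (by omega) d, mul_zero]

lemma Fa_diag (m : ℕ) (d : ℚ) : Fa m m d = (-d) ^ m := by
  induction m with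
  | zero => simp [Fa, gbinom_x_zero]
  | succ m ih =>
    rw [Fa_succ, Finset.sum_range_succ']
    rw [Finset.sum_eq_zero fun i hi => by
      have hi' := Finset.mem_range.mp hi
      rw [Fa_eq_zero m _ (by omega) d, mul_zero]]
    simp only [zero_add, Nat.add_sub_cancel, gbinom_x_one, ih]
    rw [pow_succ]
    ring

lemma Fa_diag1 (m : ℕ) (d : ℚ) : Fa m (m + 1) d = (-1) ^ m * d ^ m * m * (d - 1) / 2 := by
  induction m with
  | zero => simp [Fa, gbinom_zero_x]
  | succ m ih =>
    rw [Fa_succ, Finset.sum_range_succ', Finset.sum_range_succ']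
    rw [Finset.sum_eq_zero fun i hi => by
      have hi' := Finset.mem_range.mp hi
      rw [Fa_eq_zero m _ (by omega) d, mul_zero]]
    have e1 : m + 1 + 1 - (0 + 1 + 1) = m := by omega
    have e2 : m + 1 + 1 - (0 + 1) = m + 1 := by omega
    rw [e1, e2, gbinom_x_one, gbinom_x_two, ih, Fa_diag, neg_pow]
    push_cast
    ring

lemma Fa_diag2 (m : ℕ) (d : ℚ) : Fa m (m + 2) d
    = (-1) ^ m * d ^ m * (d - 1) * ((m : ℚ) * ((m : ℚ) - 1) * (d - 1) / 8
        + (m : ℚ) * (d - 2) / 6) := by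
  induction m with
  | zero => simp [Fa, gbinom_zero_x]
  | succ m ih =>
    rw [Fa_succ, Finset.sum_range_succ', Finset.sum_range_succ', Finset.sum_range_succ']
    rw [Finset.sum_eq_zero fun i hi => by
      have hi' := Finset.mem_range.mp hi
      rw [Fa_eq_zero m _ (by omega) d, mul_zero]]
    have e1 : m + 1 + 2 - (0 + 1 + 1 + 1) = m := by omega
    have e2 : m + 1 + 2 - (0 + 1 + 1) = m + 1 := by omega
    have e3 : m + 1 + 2 - (0 + 1) = m + 2 := by omega
    rw [e1, e2, e3, gbinom_x_one, gbinom_x_two, gbinom_x_three, ih, Fa_diag1, Fa_diag, neg_pow]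
    push_cast
    ring

theorem A2_closed_form (n : ℕ) (hn : 2 ≤ n) (d : ℚ) :
    ∑ k ∈ Finset.range n,
        (-1) ^ (n + k + 1)
          * (if k = 0 then 0 else ((n - 2).choose (k - 1) : ℚ))
          * gbinom ((k : ℚ) * d - 1) n
      = ((3 * (n : ℚ) - 2) * d - (3 * (n : ℚ) + 2)) / 24
          * d ^ (n - 2) * (d - 1) * ((n : ℚ) + 1) := by
  obtain ⟨m, rfl⟩ : ∃ m, n = m + 2 := ⟨n - 2, by omega⟩
  rw [Finset.sum_range_succ']
  simp only [Nat.add_sub_cancel, if_neg (Nat.succ_ne_zero _), Nat.succ_sub_one,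
    Nat.cast_zero, ite_true, if_pos rfl, mul_zero, zero_mul, add_zero]
  have hterm : ∀ j ∈ range (m + 1),
      (-1 : ℚ) ^ (m + 2 + (j + 1) + 1) * (m.choose j : ℚ) * gbinom ((j + 1 : ℕ) * d - 1) (m + 2)
      = (-1) ^ m * ∑ i ∈ range (m + 2 + 1),
          gbinom (d - 1) i * ((-1) ^ j * (m.choose j : ℚ) * gbinom ((j : ℚ) * d) (m + 2 - i)) := by
    intro j _
    have harg : ((j + 1 : ℕ) : ℚ) * d - 1 = (d - 1) + (j : ℚ) * d := by push_cast; ring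
    rw [harg, gbinom_add, Finset.mul_sum, Finset.mul_sum]
    refine Finset.sum_congr rfl fun i _ => ?_
    have hsign : (-1 : ℚ) ^ (m + 2 + (j + 1) + 1) = (-1) ^ m * (-1) ^ j := by
      rw [show m + 2 + (j + 1) + 1 = m + j + 2 * 2 by ring, pow_add, pow_add, pow_mul]
      norm_num
    rw [hsign]
    ring
  rw [Finset.sum_congr rfl hterm, ← Finset.mul_sum, Finset.sum_comm]
  have hFa : ∀ i ∈ range (m + 2 + 1),
      ∑ j ∈ range (m + 1),
          gbinom (d - 1) i * ((-1 : ℚ) ^ j * (m.choose j : ℚ) * gbinom ((j : ℚ) * d) (m + 2 - i))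
      = gbinom (d - 1) i * Fa m (m + 2 - i) d := by
    intro i _
    rw [Fa, Finset.mul_sum]
  rw [Finset.sum_congr rfl hFa]
  rw [Finset.sum_range_succ', Finset.sum_range_succ', Finset.sum_range_succ']
  rw [Finset.sum_eq_zero fun i hi => by
    have hi' := Finset.mem_range.mp hi
    rw [Fa_eq_zero m _ (by omega) d, mul_zero]]
  have e1 : m + 2 - (0 + 1 + 1) = m := by omega
  have e2 : m + 2 - (0 + 1) = m + 1 := by omega
  rw [Nat.sub_zero, e1, e2, gbinom_x_zero, gbinom_x_one, gbinom_x_two, Fa_diag, Fa_diag1, Fa_diag2, neg_pow]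
  push_cast
  ring_nf
  rw [mul_comm m 2, pow_mul, neg_one_sq, one_pow]
  ring
end
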